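/- For d ≥ 2, ℓ > 0 and 1 < r < (d+ℓ)/(ℓ+√d), the quadratic equation (d−1)σ² − (d−1−(ℓ−1)(r−1))σ + (r−1) = 0 has two positive real roots. -/

import Mathlib

/-- For d ≥ 2, ℓ > 0 and 1 < r < (d+ℓ)/(ℓ+√d), the quadratic equation
(d−1)σ² − (d−1−(ℓ−1)(r−1))σ + (r−1) = 0 has two positive real roots. -/
theorem stmt1 (d ℓ r : ℝ) (hd : 2 ≤ d) (hℓ : 0 < ℓ) (hr1 : 1 < r)
    (hr2 : r < (d + ℓ) / (ℓ + Real.sqrt d)) :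
    ∃ σ₃ σ₂ : ℝ, σ₃ ≠ σ₂ ∧ 0 < σ₃ ∧ 0 < σ₂ ∧
      (d - 1) * σ₃ ^ 2 - (d - 1 - (ℓ - 1) * (r - 1)) * σ₃ + (r - 1) = 0 ∧
      (d - 1) * σ₂ ^ 2 - (d - 1 - (ℓ - 1) * (r - 1)) * σ₂ + (r - 1) = 0 := by
  set sd := Real.sqrt d with hsd
  set sl := Real.sqrt ℓ with hsl
  have hd0 : (0:ℝ) ≤ d := by linarith
  have hsd2 : sd ^ 2 = d := Real.sq_sqrt hd0
  have hsl2 : sl ^ 2 = ℓ := Real.sq_sqrt hℓ.le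
  have hsd0 : 0 ≤ sd := Real.sqrt_nonneg d
  have hsl0 : 0 < sl := Real.sqrt_pos.mpr hℓ
  have hsd1 : 1 < sd := by nlinarith
  set t := r - 1 with htdef
  set a := d - 1 with hadef
  have ht : 0 < t := by simp [htdef]; linarith
  have ha : 0 < a := by simp [hadef]; linarith
  have hpos : 0 < ℓ + sd := by linarith
  -- step 2 : t * (ℓ + sd) < d - sd
  have h2 : t * (ℓ + sd) < d - sd := by
    have hr2' : r * (ℓ + sd) < d + ℓ := by
      rw [div_eq_mul_inv] at hr2
      have := (lt_div_iff₀ hpos).mp (by rw [div_eq_mul_inv]; exact hr2)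
      linarith
    nlinarith
  -- key algebraic identity
  have hkey : (d - sd) * (sl + 1) ^ 2 ≤ a * (ℓ + sd) := by
    have hiden : a * (ℓ + sd) - (d - sd) * (sl + 1) ^ 2 = (sd - 1) * (sd - sl) ^ 2 := by
      rw [hadef, ← hsd2, ← hsl2]; ring
    nlinarith [mul_nonneg (by linarith : (0:ℝ) ≤ sd - 1) (sq_nonneg (sd - sl))]
  -- step 3 : t * (sl+1)^2 < a
  have h3 : t * (sl + 1) ^ 2 < a := by
    have hs1 : 0 < (sl + 1) ^ 2 := by positivity
    have := mul_lt_mul_of_pos_right h2 hs1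
    have h4 : t * (sl + 1) ^ 2 * (ℓ + sd) < a * (ℓ + sd) := by nlinarith
    exact lt_of_mul_lt_mul_right h4 hpos.le
  set b := a - (ℓ - 1) * t with hbdef
  set sqa := Real.sqrt a with hsqa
  set sqt := Real.sqrt t with hsqt
  have hsqa2 : sqa ^ 2 = a := Real.sq_sqrt ha.le
  have hsqt2 : sqt ^ 2 = t := Real.sq_sqrt ht.le
  have hsqa0 : 0 < sqa := Real.sqrt_pos.mpr ha
  have hsqt0 : 0 < sqt := Real.sqrt_pos.mpr ht
  -- AM-GM : 2 * sqa * sqt * (sl+1) ≤ a + (sl+1)^2 * t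
  have hamgm : 2 * sqa * sqt * (sl + 1) ≤ a + (sl + 1) ^ 2 * t := by
    nlinarith [sq_nonneg (sqa - (sl + 1) * sqt)]
  -- b > 2 * sqa * sqt
  have hb : 2 * sqa * sqt < b := by
    have hbident : b * (sl + 1) - (a + (sl + 1) ^ 2 * t) = sl * (a - t * (sl + 1) ^ 2) := by
      rw [hbdef, ← hsl2]; ring
    have h5 : 0 < sl * (a - t * (sl + 1) ^ 2) := mul_pos hsl0 (by linarith)
    have h6 : 2 * sqa * sqt * (sl + 1) < b * (sl + 1) := by linarith
    have : 0 < sl + 1 := by linarith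
    exact lt_of_mul_lt_mul_right h6 this.le
  have hb0 : 0 < b := by nlinarith
  set D := b ^ 2 - 4 * a * t with hDdef
  have hsat0 : 0 < 2 * sqa * sqt := by positivity
  have h7 : (2 * sqa * sqt) * (2 * sqa * sqt) < b * b := mul_self_lt_mul_self hsat0.le hb
  have h8 : (2 * sqa * sqt) * (2 * sqa * sqt) = 4 * a * t := by
    rw [← hsqa2, ← hsqt2]; ring
  have hD : 0 < D := by
    have hbb : b ^ 2 = b * b := sq b
    rw [hDdef]; linarith
  set sD := Real.sqrt D with hsD
  have hsD2 : sD ^ 2 = D := Real.sq_sqrt hD.le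
  have hsD0 : 0 < sD := Real.sqrt_pos.mpr hD
  clear_value sd sl t a b sqa sqt D sD
  have hsDb : sD < b := by
    by_contra hcon
    push_neg at hcon
    have : b ^ 2 ≤ sD ^ 2 := pow_le_pow_left₀ hb0.le hcon 2
    have h4at : 0 < 4 * a * t := by positivity
    rw [hsD2, hDdef] at this
    linarith
  refine ⟨(b + sD) / (2 * a), (b - sD) / (2 * a), ?_, ?_, ?_, ?_, ?_⟩
  · have hlt : (b - sD) / (2 * a) < (b + sD) / (2 * a) := div_lt_div_of_pos_right (by linarith) (by linarith)
    exact ne_of_gt hlt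
  · positivity
  · apply div_pos (by linarith) (by linarith)
  · have hane : (2 * a) ≠ 0 := by positivity
    field_simp
    ring_nf
    linear_combination hsD2 + hDdef
  · have hane : (2 * a) ≠ 0 := by positivity
    field_simp
    ring_nf
    linear_combination hsD2 + hDdef
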